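/- Let f : ℤ → ℤ be congruence preserving and let p be a prime number. Then the following four conditions are equivalent: (i) λ_f(p) ≠ p; (ii) the reduction f_p : ℤ/pℤ → ℤ/pℤ is not a cyclic permutation of length p; (iii) for every x ∈ ℤ/pℤ, the cycle length l_x of f_p at x satisfies l_x < p; (iv) α(λ_f(p)) < p. -/

import Mathlib

/-- `f : ℤ → ℤ` is congruence preserving if `n ∣ (s − t)` implies
`n ∣ (f(s) − f(t))` for every positive integer `n`. -/
def IsCongruencePreserving (f : ℤ → ℤ) : Prop :=
  ∀ (s t : ℤ) (n : ℕ), 0 < n → (n : ℤ) ∣ s - t → (n : ℤ) ∣ f s - f t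

/-- The reduction `f_m : ℤ/mℤ → ℤ/mℤ` of a map `f : ℤ → ℤ`. -/
def intReduction (f : ℤ → ℤ) (m : ℕ) : ZMod m → ZMod m :=
  fun x => ((f (x.val : ℤ) : ℤ) : ZMod m)

/-- The period of a self-map: the least positive `L` with `σ^[K+L] = σ^[K]`
for some `K`. -/
noncomputable def mapPeriod {F : Type*} (σ : F → F) : ℕ :=
  sInf {L : ℕ | 0 < L ∧ ∃ K : ℕ, σ^[K + L] = σ^[K]}

/-- The cycle length of `σ` at `a`. -/
noncomputable def cycleLength {F : Type*} (σ : F → F) (a : F) : ℕ :=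
  sInf {l : ℕ | 0 < l ∧ ∃ k : ℕ, σ^[k + l] a = σ^[k] a}

/-- `alpha n` is the largest prime power dividing `n`, with `alpha 1 = 1`. -/
noncomputable def alpha (n : ℕ) : ℕ :=
  sSup {m : ℕ | (m = 1 ∨ IsPrimePow m) ∧ m ∣ n}

/-- `σ` is a cyclic permutation of length `p` of its (finite) domain: it is a
bijection and the iterates of some element pass through all elements within
`p` steps. -/
def IsCyclicPermOfLength {F : Type*} (σ : F → F) (p : ℕ) : Prop :=
  Function.Bijective σ ∧ ∃ x : F, ∀ y : F, ∃ i : ℕ, i < p ∧ σ^[i] x = y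


open Function

section Aux

variable {F : Type*}

lemma iterShift (σ : F → F) (a : F) {k l : ℕ} (j : ℕ)
    (h : σ^[k + l] a = σ^[k] a) : σ^[k + j + l] a = σ^[k + j] a := by
  have h1 : σ^[k + j + l] a = σ^[j] (σ^[k + l] a) := by
    rw [← Function.iterate_add_apply]; congr 1; omega
  rw [h1, h, ← Function.iterate_add_apply]; congr 1; omega

lemma iterMul (σ : F → F) (a : F) {k l : ℕ} (q : ℕ)
    (h : σ^[k + l] a = σ^[k] a) : σ^[k + q * l] a = σ^[k] a := by
  induction q with
  | zero => simp
  | succ n ih =>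
      have h2 : σ^[k + n * l + l] a = σ^[k + n * l] a := iterShift σ a (n * l) h
      calc σ^[k + (n + 1) * l] a = σ^[k + n * l + l] a := by congr 1; ring
        _ = σ^[k + n * l] a := h2
        _ = σ^[k] a := ih

lemma cycleSet_nonempty [Finite F] (σ : F → F) (a : F) :
    {l : ℕ | 0 < l ∧ ∃ k : ℕ, σ^[k + l] a = σ^[k] a}.Nonempty := by
  obtain ⟨i, j, hne, h⟩ := Finite.exists_ne_map_eq_of_infinite (fun n : ℕ => σ^[n] a)
  rcases Nat.lt_or_ge i j with hij | hij
  · exact ⟨j - i, by omega, i, by rw [show i + (j - i) = j by omega]; exact h.symm⟩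
  · have hji : j < i := by omega
    exact ⟨i - j, by omega, j, by rw [show j + (i - j) = i by omega]; exact h⟩

lemma cycleLength_spec [Finite F] (σ : F → F) (a : F) :
    0 < cycleLength σ a ∧ ∃ k : ℕ, σ^[k + cycleLength σ a] a = σ^[k] a :=
  Nat.sInf_mem (cycleSet_nonempty σ a)

lemma cycleLength_dvd' [Finite F] (σ : F → F) (a : F) {l k : ℕ} (hl : 0 < l)
    (h : σ^[k + l] a = σ^[k] a) : cycleLength σ a ∣ l := by
  obtain ⟨hc, k0, hk0⟩ := cycleLength_spec σ a
  set c := cycleLength σ a with hcdef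
  set K := k0 + k with hK
  have hA : σ^[K + c] a = σ^[K] a := iterShift σ a k hk0
  have hB : σ^[K + l] a = σ^[K] a := by
    have h2 := iterShift σ a k0 h
    calc σ^[K + l] a = σ^[k + k0 + l] a := by congr 1; omega
      _ = σ^[k + k0] a := h2
      _ = σ^[K] a := by congr 1; omega
  have hA' : σ^[K + l % c + c] a = σ^[K + l % c] a := iterShift σ a (l % c) hA
  have hMul : σ^[K + l % c + l / c * c] a = σ^[K + l % c] a := iterMul σ a (l / c) hA'
  have hmd := Nat.mod_add_div' l c
  have hR : σ^[K + l % c] a = σ^[K] a := by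
    calc σ^[K + l % c] a = σ^[K + l % c + l / c * c] a := hMul.symm
      _ = σ^[K + l] a := by congr 1; omega
      _ = σ^[K] a := hB
  rcases Nat.eq_zero_or_pos (l % c) with h0 | h0
  · exact Nat.dvd_of_mod_eq_zero h0
  · exfalso
    have hle : c ≤ l % c := Nat.sInf_le ⟨h0, K, hR⟩
    have : l % c < c := Nat.mod_lt _ hc
    omega

lemma cycleLength_le_card [Fintype F] (σ : F → F) (a : F) :
    cycleLength σ a ≤ Fintype.card F := by
  obtain ⟨i, j, hne, h⟩ := Fintype.exists_ne_map_eq_of_card_lt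
    (fun n : Fin (Fintype.card F + 1) => σ^[(n : ℕ)] a) (by simp)
  have hij : (i : ℕ) ≠ (j : ℕ) := fun hc => hne (Fin.ext hc)
  rcases Nat.lt_or_ge (i : ℕ) (j : ℕ) with hlt | hge
  · have : cycleLength σ a ≤ (j : ℕ) - (i : ℕ) := Nat.sInf_le
      ⟨by omega, i, by rw [show (i : ℕ) + ((j : ℕ) - (i : ℕ)) = (j : ℕ) by omega]; exact h.symm⟩
    have := j.isLt; omega
  · have hlt : (j : ℕ) < (i : ℕ) := by omega
    have : cycleLength σ a ≤ (i : ℕ) - (j : ℕ) := Nat.sInf_le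
      ⟨by omega, j, by rw [show (j : ℕ) + ((i : ℕ) - (j : ℕ)) = (i : ℕ) by omega]; exact h⟩
    have := i.isLt; omega

lemma comp_iterate (σ : F → F) (n : ℕ) :
    (fun g : F → F => σ ∘ g)^[n] id = σ^[n] := by
  induction n with
  | zero => simp
  | succ n ih =>
      rw [Function.iterate_succ_apply', ih]
      exact (Function.iterate_succ' σ n).symm

lemma mapPeriod_eq_cycleLength (σ : F → F) :
    mapPeriod σ = cycleLength (fun g : F → F => σ ∘ g) id := by
  unfold mapPeriod cycleLength
  congr 1
  ext L
  simp only [Set.mem_setOf_eq, comp_iterate]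

lemma mapPeriod_spec [Finite F] (σ : F → F) :
    0 < mapPeriod σ ∧ ∃ K : ℕ, σ^[K + mapPeriod σ] = σ^[K] := by
  have h := cycleLength_spec (fun g : F → F => σ ∘ g) id
  rw [mapPeriod_eq_cycleLength]
  simpa only [comp_iterate] using h

lemma mapPeriod_dvd' [Finite F] (σ : F → F) {L K : ℕ} (hL : 0 < L)
    (h : σ^[K + L] = σ^[K]) : mapPeriod σ ∣ L := by
  rw [mapPeriod_eq_cycleLength]
  exact cycleLength_dvd' _ id hL (by simp only [comp_iterate]; exact h)

lemma cycleLength_dvd_mapPeriod [Finite F] (σ : F → F) (a : F) :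
    cycleLength σ a ∣ mapPeriod σ := by
  obtain ⟨hpos, K, hK⟩ := mapPeriod_spec σ
  exact cycleLength_dvd' σ a hpos (by rw [hK])

lemma mapPeriod_dvd_lcm [Fintype F] (σ : F → F) :
    mapPeriod σ ∣ Finset.univ.lcm (cycleLength σ) := by
  classical
  set M := Finset.univ.lcm (cycleLength σ) with hM
  have hMne : M ≠ 0 := by
    intro h0
    rw [hM, Finset.lcm_eq_zero_iff] at h0
    obtain ⟨a, -, ha⟩ := h0
    exact (cycleLength_spec σ a).1.ne' ha
  set k : F → ℕ := fun a => (cycleLength_spec σ a).2.choose with hk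
  have hkspec : ∀ a, σ^[k a + cycleLength σ a] a = σ^[k a] a :=
    fun a => (cycleLength_spec σ a).2.choose_spec
  set K := Finset.univ.sum k with hKdef
  have hle : ∀ a : F, k a ≤ K :=
    fun a => Finset.single_le_sum (fun _ _ => Nat.zero_le _) (Finset.mem_univ a)
  have h2 : ∀ a : F, σ^[K + M] a = σ^[K] a := by
    intro a
    have h1 : σ^[K + cycleLength σ a] a = σ^[K] a := by
      have := iterShift σ a (K - k a) (hkspec a)
      calc σ^[K + cycleLength σ a] a = σ^[k a + (K - k a) + cycleLength σ a] a := by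
            congr 1; have := hle a; omega
        _ = σ^[k a + (K - k a)] a := this
        _ = σ^[K] a := by congr 1; have := hle a; omega
    obtain ⟨q, hq⟩ := Finset.dvd_lcm (f := cycleLength σ) (Finset.mem_univ a)
    calc σ^[K + M] a = σ^[K + q * cycleLength σ a] a := by congr 1; rw [hM, hq]; ring
      _ = σ^[K] a := iterMul σ a q h1
  exact mapPeriod_dvd' σ (Nat.pos_of_ne_zero hMne) (funext h2)

end Aux

lemma pow_dvd_lcm_split {r i m n : ℕ} (hr : r.Prime) (hm : m ≠ 0) (hn : n ≠ 0)
    (h : r ^ i ∣ Nat.lcm m n) : r ^ i ∣ m ∨ r ^ i ∣ n := by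
  have hlcm : Nat.lcm m n ≠ 0 := Nat.lcm_ne_zero hm hn
  rw [hr.pow_dvd_iff_le_factorization hlcm, Nat.factorization_lcm hm hn,
    Finsupp.sup_apply] at h
  rcases Nat.le_total (m.factorization r) (n.factorization r) with hc | hc
  · right; rw [hr.pow_dvd_iff_le_factorization hn]; omega
  · left; rw [hr.pow_dvd_iff_le_factorization hm]; omega

lemma primePow_dvd_finset_lcm {β : Type*} {s : Finset β} {g : β → ℕ}
    (hg : ∀ b ∈ s, g b ≠ 0) {r i : ℕ} (hr : r.Prime) (hi : 0 < i)
    (h : r ^ i ∣ s.lcm g) : ∃ b ∈ s, r ^ i ∣ g b := by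
  classical
  induction s using Finset.induction_on with
  | empty =>
      exfalso
      rw [Finset.lcm_empty] at h
      have h1 : r ^ i = 1 := Nat.eq_one_of_dvd_one h
      have := hr.one_lt
      have : 1 < r ^ i := Nat.one_lt_pow (by omega) (by omega)
      omega
  | @insert a s ha ih =>
      rw [Finset.lcm_insert] at h
      have hsne : s.lcm g ≠ 0 := by
        intro h0
        rw [Finset.lcm_eq_zero_iff] at h0
        obtain ⟨b, hb, hb0⟩ := h0
        exact hg b (Finset.mem_insert_of_mem hb) hb0
      have h' : r ^ i ∣ Nat.lcm (g a) (s.lcm g) := by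
        rwa [lcm_eq_nat_lcm] at h
      rcases pow_dvd_lcm_split hr (hg a (Finset.mem_insert_self a s)) hsne h' with hc | hc
      · exact ⟨a, Finset.mem_insert_self a s, hc⟩
      · obtain ⟨b, hb, hbd⟩ := ih (fun b hb => hg b (Finset.mem_insert_of_mem hb)) hc
        exact ⟨b, Finset.mem_insert_of_mem hb, hbd⟩
section PrimePart

variable {p : ℕ}

lemma cycleLength_le_p (hp : p.Prime) (σ : ZMod p → ZMod p) (a : ZMod p) :
    cycleLength σ a ≤ p := by
  haveI : NeZero p := ⟨hp.ne_zero⟩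
  have h := cycleLength_le_card σ a
  rwa [ZMod.card] at h

lemma cover_of_cycle (hp : p.Prime) (σ : ZMod p → ZMod p) (x : ZMod p)
    (hx : cycleLength σ x = p) :
    ∃ k : ℕ, σ^[k + p] x = σ^[k] x ∧ ∀ a : ZMod p, ∃ i : ℕ, i < p ∧ σ^[k + i] x = a := by
  haveI : NeZero p := ⟨hp.ne_zero⟩
  obtain ⟨-, k, hk⟩ := cycleLength_spec σ x
  rw [hx] at hk
  refine ⟨k, hk, ?_⟩
  have key : ∀ i j : Fin p, (i : ℕ) < (j : ℕ) → σ^[k + (i : ℕ)] x = σ^[k + (j : ℕ)] x → False := by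
    intro i j hij hgij
    have h1 : σ^[k + (i : ℕ) + ((j : ℕ) - (i : ℕ))] x = σ^[k + (i : ℕ)] x := by
      rw [show k + (i : ℕ) + ((j : ℕ) - (i : ℕ)) = k + (j : ℕ) by omega]; exact hgij.symm
    have h2 := cycleLength_dvd' σ x (l := (j : ℕ) - (i : ℕ)) (by omega) h1
    rw [hx] at h2
    have := Nat.le_of_dvd (by omega) h2
    have := j.isLt
    omega
  have hinj : Function.Injective (fun i : Fin p => σ^[k + (i : ℕ)] x) := by
    intro i j hgij
    by_contra hne
    have hij : (i : ℕ) ≠ (j : ℕ) := fun hc => hne (Fin.ext hc)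
    rcases Nat.lt_or_ge (i : ℕ) (j : ℕ) with hlt | hge
    · exact key i j hlt hgij
    · exact key j i (by omega) hgij.symm
  have hbij : Function.Bijective (fun i : Fin p => σ^[k + (i : ℕ)] x) :=
    (Fintype.bijective_iff_injective_and_card _).mpr ⟨hinj, by simp [ZMod.card]⟩
  intro a
  obtain ⟨i, hi⟩ := hbij.surjective a
  exact ⟨(i : ℕ), i.isLt, hi⟩

lemma period_eq_of_cycle (hp : p.Prime) (σ : ZMod p → ZMod p) (x : ZMod p)
    (hx : cycleLength σ x = p) : mapPeriod σ = p := by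
  haveI : NeZero p := ⟨hp.ne_zero⟩
  obtain ⟨k, hk, hcov⟩ := cover_of_cycle hp σ x hx
  have hfix : ∀ a : ZMod p, σ^[p] a = a := by
    intro a
    obtain ⟨i, hip, hi⟩ := hcov a
    calc σ^[p] a = σ^[p] (σ^[k + i] x) := by rw [hi]
      _ = σ^[i + (k + p)] x := by rw [← Function.iterate_add_apply]; congr 1; omega
      _ = σ^[i] (σ^[k + p] x) := Function.iterate_add_apply σ i (k + p) x
      _ = σ^[i] (σ^[k] x) := by rw [hk]
      _ = σ^[k + i] x := by rw [← Function.iterate_add_apply]; congr 1; omega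
      _ = a := hi
  have hS : σ^[0 + p] = σ^[0] := by
    funext a
    simpa using hfix a
  have hdvd : mapPeriod σ ∣ p := mapPeriod_dvd' σ hp.pos hS
  have hne1 : mapPeriod σ ≠ 1 := by
    intro h1
    obtain ⟨-, K, hK⟩ := mapPeriod_spec σ
    rw [h1] at hK
    have h2 : cycleLength σ x ∣ 1 :=
      cycleLength_dvd' σ x one_pos (congrFun hK x)
    rw [hx] at h2
    have := hp.one_lt
    have := Nat.le_of_dvd one_pos h2
    omega
  rcases (Nat.Prime.eq_one_or_self_of_dvd hp _ hdvd) with h | h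
  · exact absurd h hne1
  · exact h

lemma cycle_of_period (hp : p.Prime) (σ : ZMod p → ZMod p)
    (h : mapPeriod σ = p) : ∃ x : ZMod p, cycleLength σ x = p := by
  haveI : NeZero p := ⟨hp.ne_zero⟩
  classical
  have hdvd : p ∣ Finset.univ.lcm (cycleLength σ) := by
    have h2 := mapPeriod_dvd_lcm σ
    rwa [h] at h2
  have hdvd' : p ^ 1 ∣ Finset.univ.lcm (cycleLength σ) := by simpa using hdvd
  obtain ⟨b, -, hb⟩ := primePow_dvd_finset_lcm
    (fun b _ => (cycleLength_spec σ b).1.ne') hp one_pos hdvd'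
  rw [pow_one] at hb
  refine ⟨b, le_antisymm (cycleLength_le_p hp σ b) (Nat.le_of_dvd (cycleLength_spec σ b).1 hb)⟩

lemma cyclic_of_cycle (hp : p.Prime) (σ : ZMod p → ZMod p) (x : ZMod p)
    (hx : cycleLength σ x = p) : IsCyclicPermOfLength σ p := by
  haveI : NeZero p := ⟨hp.ne_zero⟩
  obtain ⟨k, hk, hcov⟩ := cover_of_cycle hp σ x hx
  have hsurj : Function.Surjective σ := by
    intro a
    obtain ⟨i, hip, hi⟩ := hcov a
    have hsh : σ^[k + i + p] x = σ^[k + i] x := iterShift σ x i hk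
    refine ⟨σ^[k + i + p - 1] x, ?_⟩
    calc σ (σ^[k + i + p - 1] x) = σ^[k + i + p - 1 + 1] x :=
          (Function.iterate_succ_apply' σ _ x).symm
      _ = σ^[k + i + p] x := by congr 1; have := hp.pos; omega
      _ = σ^[k + i] x := hsh
      _ = a := hi
  refine ⟨Finite.surjective_iff_bijective.mp hsurj, σ^[k] x, ?_⟩
  intro y
  obtain ⟨i, hip, hi⟩ := hcov y
  refine ⟨i, hip, ?_⟩
  rw [← Function.iterate_add_apply]
  rw [show i + k = k + i by omega]
  exact hi

lemma cycle_of_cyclic (hp : p.Prime) (σ : ZMod p → ZMod p)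
    (h : IsCyclicPermOfLength σ p) : ∃ x : ZMod p, cycleLength σ x = p := by
  haveI : NeZero p := ⟨hp.ne_zero⟩
  obtain ⟨hbij, x, hx⟩ := h
  refine ⟨x, ?_⟩
  have hsurj : Function.Surjective (fun i : Fin p => σ^[(i : ℕ)] x) := by
    intro y
    obtain ⟨i, hip, hi⟩ := hx y
    exact ⟨⟨i, hip⟩, hi⟩
  have hinj : Function.Injective (fun i : Fin p => σ^[(i : ℕ)] x) :=
    ((Fintype.bijective_iff_surjective_and_card _).mpr ⟨hsurj, by simp [ZMod.card]⟩).injective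
  obtain ⟨i, hip, hi⟩ := hx (σ^[p] x)
  have hi0 : i = 0 := by
    by_contra h0
    have h1 : σ^[i] (σ^[p - i] x) = σ^[i] x := by
      rw [← Function.iterate_add_apply, show i + (p - i) = p by omega]
      exact hi.symm
    have h2 : σ^[p - i] x = x := hbij.injective.iterate i h1
    have h3 : (⟨p - i, by omega⟩ : Fin p) = ⟨0, hp.pos⟩ := hinj (by simpa using h2)
    have := Fin.mk.injEq (p - i) (by omega : p - i < p) 0 hp.pos ▸ h3
    simp only [Fin.mk.injEq] at h3
    omega
  rw [hi0] at hi
  simp only [Function.iterate_zero, id_eq] at hi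
  have hpx : σ^[0 + p] x = σ^[0] x := by simpa using hi.symm
  have hdvd : cycleLength σ x ∣ p := cycleLength_dvd' σ x hp.pos hpx
  have hne1 : cycleLength σ x ≠ 1 := by
    intro h1
    obtain ⟨-, k, hk⟩ := cycleLength_spec σ x
    rw [h1] at hk
    have hfx : σ x = x := by
      have h2 : σ^[k] (σ x) = σ^[k] x := by
        rw [← Function.iterate_succ_apply, ← Nat.add_one]
        exact hk
      exact (hbij.injective.iterate k) h2
    obtain ⟨y, hy⟩ := Fintype.exists_ne_of_one_lt_card (by rw [ZMod.card]; exact hp.one_lt) x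
    obtain ⟨j, hjp, hj⟩ := hx y
    have : σ^[j] x = x := Function.iterate_fixed hfx j
    exact hy (by rw [← hj, this])
  rcases (Nat.Prime.eq_one_or_self_of_dvd hp _ hdvd) with h | h
  · exact absurd h hne1
  · exact h

end PrimePart

lemma alpha_of_prime {p : ℕ} (hp : p.Prime) : alpha p = p := by
  have hmem : p ∈ {m : ℕ | (m = 1 ∨ IsPrimePow m) ∧ m ∣ p} :=
    ⟨Or.inr hp.isPrimePow, dvd_rfl⟩
  have hbdd : BddAbove {m : ℕ | (m = 1 ∨ IsPrimePow m) ∧ m ∣ p} :=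
    ⟨p, fun m hm => Nat.le_of_dvd hp.pos hm.2⟩
  exact le_antisymm (csSup_le ⟨p, hmem⟩ fun m hm => Nat.le_of_dvd hp.pos hm.2)
    (le_csSup hbdd hmem)

lemma alpha_lt {P q : ℕ} (hP : P ≠ 0) (h2 : 2 ≤ q)
    (hq : ∀ m : ℕ, IsPrimePow m → m ∣ P → m < q) : alpha P < q := by
  have h : alpha P ≤ q - 1 := by
    have hne : Set.Nonempty {m : ℕ | (m = 1 ∨ IsPrimePow m) ∧ m ∣ P} :=
      ⟨1, Or.inl rfl, one_dvd _⟩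
    unfold alpha
    apply csSup_le hne
    rintro m ⟨h1 | hpp, hdvd⟩
    · omega
    · have := hq m hpp hdvd; omega
  omega

lemma alpha_mem {P : ℕ} (hP : P ≠ 0) :
    alpha P = 1 ∨ (IsPrimePow (alpha P) ∧ alpha P ∣ P) := by
  have h := Nat.sSup_mem (s := {m : ℕ | (m = 1 ∨ IsPrimePow m) ∧ m ∣ P})
    ⟨1, Or.inl rfl, one_dvd _⟩ ⟨P, fun m hm => Nat.le_of_dvd (Nat.pos_of_ne_zero hP) hm.2⟩
  obtain ⟨h1 | hpp, hdvd⟩ := h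
  · exact Or.inl h1
  · exact Or.inr ⟨hpp, hdvd⟩

theorem stmt_10 (f : ℤ → ℤ) (hf : IsCongruencePreserving f)
    (p : ℕ) (hp : p.Prime) :
    [ mapPeriod (intReduction f p) ≠ p,
      ¬ IsCyclicPermOfLength (intReduction f p) p,
      ∀ x : ZMod p, cycleLength (intReduction f p) x < p,
      alpha (mapPeriod (intReduction f p)) < p ].TFAE := by
  haveI : NeZero p := ⟨hp.ne_zero⟩
  classical
  set σ := intReduction f p with hσ
  have h1 : mapPeriod σ = p ↔ ∃ x : ZMod p, cycleLength σ x = p :=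
    ⟨cycle_of_period hp σ, fun ⟨x, hx⟩ => period_eq_of_cycle hp σ x hx⟩
  have h2 : IsCyclicPermOfLength σ p ↔ ∃ x : ZMod p, cycleLength σ x = p :=
    ⟨cycle_of_cyclic hp σ, fun ⟨x, hx⟩ => cyclic_of_cycle hp σ x hx⟩
  have h3 : (∀ x : ZMod p, cycleLength σ x < p) ↔ ¬ ∃ x : ZMod p, cycleLength σ x = p := by
    constructor
    · rintro h ⟨x, hx⟩; have := h x; omega
    · intro h x
      have hle := cycleLength_le_p hp σ x
      have hne : cycleLength σ x ≠ p := fun hc => h ⟨x, hc⟩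
      omega
  have h4 : alpha (mapPeriod σ) < p ↔ ¬ ∃ x : ZMod p, cycleLength σ x = p := by
    constructor
    · rintro h ⟨x, hx⟩
      rw [period_eq_of_cycle hp σ x hx, alpha_of_prime hp] at h
      omega
    · intro hne
      apply alpha_lt (mapPeriod_spec σ).1.ne' hp.two_le
      intro m hm hdvd
      obtain ⟨r, i, hr, hi, rfl⟩ := hm
      have hr' : r.Prime := Nat.prime_iff.mpr hr
      have hdvd2 : r ^ i ∣ Finset.univ.lcm (cycleLength σ) :=
        hdvd.trans (mapPeriod_dvd_lcm σ)
      obtain ⟨b, -, hb⟩ := primePow_dvd_finset_lcm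
        (fun b _ => (cycleLength_spec σ b).1.ne') hr' hi hdvd2
      have hble := cycleLength_le_p hp σ b
      have hbne : cycleLength σ b ≠ p := fun hc => hne ⟨b, hc⟩
      have := Nat.le_of_dvd (cycleLength_spec σ b).1 hb
      omega
  tfae_have 1 ↔ 2 := not_congr (h1.trans h2.symm)
  tfae_have 3 ↔ 1 := h3.trans (not_congr h1).symm
  tfae_have 4 ↔ 1 := h4.trans (not_congr h1).symm
  tfae_finish
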